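/- For 0 < γ < σ ≤ 1 and 0 ≤ α ≤ ρ (ρ > 0), the function h(t) = csch(ρ t^γ)/e^{α t^γ} on (0,∞) satisfies h > 0, h' < 0, h'' > 0. -/

import Mathlib

open Real

private noncomputable def Gfun (a b γ : ℝ) : ℝ → ℝ := fun t =>
  -(2 * ((a * Real.exp (a * t ^ γ) + b * Real.exp (-(b * t ^ γ))) * (γ * t ^ (γ - 1)))) /
    (Real.exp (a * t ^ γ) - Real.exp (-(b * t ^ γ))) ^ 2

private lemma rpow_hasDeriv {t : ℝ} (γ : ℝ) (ht : 0 < t) :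
    HasDerivAt (fun x : ℝ => x ^ γ) (γ * t ^ (γ - 1)) t :=
  Real.hasDerivAt_rpow_const (Or.inl ht.ne')

private lemma aux (a b γ : ℝ) (ha : 0 < a) (hb : 0 ≤ b) (hγ : 0 < γ) (hγ1 : γ ≤ 1) :
    ∀ t : ℝ, 0 < t →
      deriv (fun t : ℝ => 2 / (Real.exp (a * t ^ γ) - Real.exp (-(b * t ^ γ)))) t < 0 ∧
      0 < deriv (deriv (fun t : ℝ => 2 / (Real.exp (a * t ^ γ) - Real.exp (-(b * t ^ γ))))) t := by
  have hP : ∀ t : ℝ, 0 < t → 0 < Real.exp (a * t ^ γ) - Real.exp (-(b * t ^ γ)) := by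
    intro t ht
    have hu : 0 < t ^ γ := Real.rpow_pos_of_pos ht γ
    have h : -(b * t ^ γ) < a * t ^ γ := by nlinarith
    simpa [sub_pos] using Real.exp_lt_exp.2 h
  have hDP : ∀ t : ℝ, 0 < t →
      HasDerivAt (fun t : ℝ => Real.exp (a * t ^ γ) - Real.exp (-(b * t ^ γ)))
        ((a * Real.exp (a * t ^ γ) + b * Real.exp (-(b * t ^ γ))) * (γ * t ^ (γ - 1))) t := by
    intro t ht
    have hu := rpow_hasDeriv γ ht
    have h1 := ((hu.const_mul a).exp).sub (((hu.const_mul b).neg).exp)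
    refine h1.congr_deriv ?_
    simp only [Pi.neg_apply]
    ring
  have hDf : ∀ t : ℝ, 0 < t →
      HasDerivAt (fun t : ℝ => 2 / (Real.exp (a * t ^ γ) - Real.exp (-(b * t ^ γ))))
        (Gfun a b γ t) t := by
    intro t ht
    have h := (hasDerivAt_const t (2 : ℝ)).div (hDP t ht) (hP t ht).ne'
    refine h.congr_deriv ?_
    simp only [Gfun]
    ring
  intro t ht
  have hE1 : 0 < Real.exp (a * t ^ γ) := Real.exp_pos _
  have hE2 : 0 < Real.exp (-(b * t ^ γ)) := Real.exp_pos _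
  have hv : 0 < γ * t ^ (γ - 1) := mul_pos hγ (Real.rpow_pos_of_pos ht _)
  have hQ : 0 < a * Real.exp (a * t ^ γ) + b * Real.exp (-(b * t ^ γ)) := by nlinarith
  constructor
  · -- first derivative negative
    rw [(hDf t ht).deriv]
    simp only [Gfun]
    apply div_neg_of_neg_of_pos
    · nlinarith
    · exact pow_pos (hP t ht) 2
  · -- second derivative positive
    have hev : deriv (fun t : ℝ => 2 / (Real.exp (a * t ^ γ) - Real.exp (-(b * t ^ γ))))
        =ᶠ[nhds t] Gfun a b γ := by
      filter_upwards [isOpen_Ioi.mem_nhds (Set.mem_Ioi.2 ht)] with s hs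
      exact (hDf s hs).deriv
    rw [hev.deriv_eq]
    -- derivative of Gfun
    have hu := rpow_hasDeriv γ ht
    have hv' : HasDerivAt (fun t : ℝ => γ * t ^ (γ - 1)) (γ * ((γ - 1) * t ^ (γ - 1 - 1))) t :=
      (rpow_hasDeriv (γ - 1) ht).const_mul γ
    have hQd : HasDerivAt
        (fun t : ℝ => a * Real.exp (a * t ^ γ) + b * Real.exp (-(b * t ^ γ)))
        ((a ^ 2 * Real.exp (a * t ^ γ) - b ^ 2 * Real.exp (-(b * t ^ γ))) * (γ * t ^ (γ - 1))) t := by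
      have h1 := ((hu.const_mul a).exp.const_mul a).add ((((hu.const_mul b).neg).exp).const_mul b)
      refine h1.congr_deriv ?_
      simp only [Pi.neg_apply]
      ring
    have hnum : HasDerivAt
        (fun t : ℝ => -(2 * ((a * Real.exp (a * t ^ γ) + b * Real.exp (-(b * t ^ γ))) * (γ * t ^ (γ - 1)))))
        (-(2 * ((a ^ 2 * Real.exp (a * t ^ γ) - b ^ 2 * Real.exp (-(b * t ^ γ))) * (γ * t ^ (γ - 1)) * (γ * t ^ (γ - 1)) +
          (a * Real.exp (a * t ^ γ) + b * Real.exp (-(b * t ^ γ))) * (γ * ((γ - 1) * t ^ (γ - 1 - 1)))))) t := by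
      exact ((hQd.mul hv').const_mul 2).neg
    have hden : HasDerivAt
        (fun t : ℝ => (Real.exp (a * t ^ γ) - Real.exp (-(b * t ^ γ))) ^ 2)
        (2 * (Real.exp (a * t ^ γ) - Real.exp (-(b * t ^ γ))) ^ 1 *
          ((a * Real.exp (a * t ^ γ) + b * Real.exp (-(b * t ^ γ))) * (γ * t ^ (γ - 1)))) t := by
      have := (hDP t ht).pow 2
      refine this.congr_deriv ?_
      norm_num
    have hG : HasDerivAt (Gfun a b γ)
        ((-(2 * ((a ^ 2 * Real.exp (a * t ^ γ) - b ^ 2 * Real.exp (-(b * t ^ γ))) * (γ * t ^ (γ - 1)) * (γ * t ^ (γ - 1)) +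
          (a * Real.exp (a * t ^ γ) + b * Real.exp (-(b * t ^ γ))) * (γ * ((γ - 1) * t ^ (γ - 1 - 1))))) *
            (Real.exp (a * t ^ γ) - Real.exp (-(b * t ^ γ))) ^ 2 -
          -(2 * ((a * Real.exp (a * t ^ γ) + b * Real.exp (-(b * t ^ γ))) * (γ * t ^ (γ - 1)))) *
            (2 * (Real.exp (a * t ^ γ) - Real.exp (-(b * t ^ γ))) ^ 1 *
              ((a * Real.exp (a * t ^ γ) + b * Real.exp (-(b * t ^ γ))) * (γ * t ^ (γ - 1))))) /
          ((Real.exp (a * t ^ γ) - Real.exp (-(b * t ^ γ))) ^ 2) ^ 2) t := by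
      exact hnum.div hden (pow_ne_zero 2 (hP t ht).ne')
    rw [hG.deriv]
    set E1 := Real.exp (a * t ^ γ) with hE1def
    set E2 := Real.exp (-(b * t ^ γ)) with hE2def
    set v := γ * t ^ (γ - 1) with hvdef
    set w := γ * ((γ - 1) * t ^ (γ - 1 - 1)) with hwdef
    have hw : w ≤ 0 := by
      have h1 : (γ - 1) * t ^ (γ - 1 - 1) ≤ 0 :=
        mul_nonpos_of_nonpos_of_nonneg (by linarith) (Real.rpow_pos_of_pos ht _).le
      exact mul_nonpos_of_nonneg_of_nonpos hγ.le h1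
    have hPt : 0 < E1 - E2 := hP t ht
    have key : -(2 * ((a ^ 2 * E1 - b ^ 2 * E2) * v * v + (a * E1 + b * E2) * w)) * (E1 - E2) ^ 2 -
        -(2 * ((a * E1 + b * E2) * v)) * (2 * (E1 - E2) ^ 1 * ((a * E1 + b * E2) * v)) =
        (E1 - E2) * (2 * v ^ 2 * (a ^ 2 * E1 ^ 2 + b ^ 2 * E2 ^ 2 + (a ^ 2 + 4 * a * b + b ^ 2) * (E1 * E2)) +
          2 * (a * E1 + b * E2) * (-w) * (E1 - E2)) := by
      ring
    rw [key]
    apply div_pos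
    · apply mul_pos hPt
      apply add_pos_of_pos_of_nonneg
      · have h1 : 0 < a ^ 2 * E1 ^ 2 + b ^ 2 * E2 ^ 2 + (a ^ 2 + 4 * a * b + b ^ 2) * (E1 * E2) := by
          have p1 : 0 < a ^ 2 * E1 ^ 2 := by positivity
          have p2 : (0:ℝ) ≤ b ^ 2 * E2 ^ 2 := by positivity
          have p3 : (0:ℝ) ≤ (a ^ 2 + 4 * a * b + b ^ 2) * (E1 * E2) :=
            mul_nonneg (by nlinarith) (mul_pos hE1 hE2).le
          linarith
        positivity
      · have : 0 ≤ -w := neg_nonneg.2 hw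
        have := mul_nonneg (mul_nonneg (by positivity : (0:ℝ) ≤ 2 * (a * E1 + b * E2)) this) hPt.le
        linarith [this]
    · positivity

theorem stmt8 (σ γ α ρ : ℝ) (hγ : 0 < γ) (hγσ : γ < σ) (hσ : σ ≤ 1) (hα : 0 ≤ α)
    (hαρ : α ≤ ρ) (hρ : 0 < ρ) :
    ∀ t : ℝ, 0 < t →
      0 < (2 / (Real.exp (ρ * t ^ γ) - Real.exp (-(ρ * t ^ γ)))) * Real.exp (-(α * t ^ γ)) ∧
      deriv (fun t : ℝ =>
        (2 / (Real.exp (ρ * t ^ γ) - Real.exp (-(ρ * t ^ γ)))) * Real.exp (-(α * t ^ γ))) t < 0 ∧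
      0 < deriv (deriv (fun t : ℝ =>
        (2 / (Real.exp (ρ * t ^ γ) - Real.exp (-(ρ * t ^ γ)))) * Real.exp (-(α * t ^ γ)))) t := by
  have hfeq : (fun t : ℝ =>
      (2 / (Real.exp (ρ * t ^ γ) - Real.exp (-(ρ * t ^ γ)))) * Real.exp (-(α * t ^ γ))) =
      (fun t : ℝ => 2 / (Real.exp ((ρ + α) * t ^ γ) - Real.exp (-((ρ - α) * t ^ γ)))) := by
    funext x
    have e1 : Real.exp ((ρ + α) * x ^ γ) = Real.exp (ρ * x ^ γ) * Real.exp (α * x ^ γ) := by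
      rw [← Real.exp_add]; congr 1; ring
    have e2 : Real.exp (-((ρ - α) * x ^ γ)) = Real.exp (-(ρ * x ^ γ)) * Real.exp (α * x ^ γ) := by
      rw [← Real.exp_add]; congr 1; ring
    rw [e1, e2, ← sub_mul, Real.exp_neg, div_mul_eq_div_div, div_eq_mul_inv,
      Real.exp_neg, ← div_eq_mul_inv]
  intro t ht
  have hu : 0 < t ^ γ := Real.rpow_pos_of_pos ht γ
  have hD : Real.exp (-(ρ * t ^ γ)) < Real.exp (ρ * t ^ γ) := by
    apply Real.exp_lt_exp.2; nlinarith
  refine ⟨?_, ?_, ?_⟩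
  · exact mul_pos (div_pos two_pos (sub_pos.2 hD)) (Real.exp_pos _)
  · rw [hfeq]
    exact (aux (ρ + α) (ρ - α) γ (by linarith) (by linarith) hγ (by linarith) t ht).1
  · rw [hfeq]
    exact (aux (ρ + α) (ρ - α) γ (by linarith) (by linarith) hγ (by linarith) t ht).2
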